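/- Let 0 < ε < 1/√2 and X = [[1, 0],[ε, 1]]. If Θ ∈ ℝ^{2×2} has rank at most 1 and all entries of Θ are nonnegative, then ‖X − max(0, Θ)‖_F² ≥ (2 + ε² − ε√(ε² + 4))/2 > ε². -/
import Mathlib

open Finset Matrix

theorem nonneg_rank_one_lower_bound (ε : ℝ) (hε0 : 0 < ε) (hε1 : ε < 1 / Real.sqrt 2)
    (Θ : Matrix (Fin 2) (Fin 2) ℝ) (hrank : Θ.rank ≤ 1) (hΘ : ∀ i j, 0 ≤ Θ i j) :
    let X : Matrix (Fin 2) (Fin 2) ℝ := !![1, 0; ε, 1]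
    (2 + ε^2 - ε * Real.sqrt (ε^2 + 4)) / 2 ≤ ∑ i, ∑ j, (X i j - max 0 (Θ i j))^2 ∧
    ε^2 < (2 + ε^2 - ε * Real.sqrt (ε^2 + 4)) / 2 := by
  intro X
  set t := Real.sqrt (ε^2 + 4) with ht
  have ht2 : t^2 = ε^2 + 4 := Real.sq_sqrt (by positivity)
  have htpos : 0 < t := Real.sqrt_pos.2 (by positivity)
  have hε2 : ε^2 < 1/2 := by
    have h2 : (Real.sqrt 2)^2 = 2 := Real.sq_sqrt (by norm_num)
    have hs2 : 0 < Real.sqrt 2 := Real.sqrt_pos.2 (by norm_num)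
    have := pow_lt_pow_left₀ hε1 hε0.le (two_ne_zero)
    rw [div_pow, one_pow, h2] at this
    exact this
  set s := (2 + ε^2 - ε * t) / 2 with hs
  have hεs : ε^2 < s := by nlinarith [htpos.le, mul_pos hε0 htpos]
  have hs1 : s < 1 := by nlinarith [mul_pos hε0 htpos]
  have hkey : (1 + ε^2 - s) * (1 - s) = ε^2 := by
    rw [hs]; ring_nf; nlinarith [ht2]
  refine ⟨?_, hεs⟩
  -- det = 0
  have hdet : Θ.det = 0 := by
    by_contra h
    have hu : IsUnit Θ := (Matrix.isUnit_iff_isUnit_det Θ).2 (isUnit_iff_ne_zero.2 h)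
    have := Matrix.rank_of_isUnit Θ hu
    rw [this] at hrank
    simp at hrank
  rw [Matrix.det_fin_two] at hdet
  set a := Θ 0 0; set b := Θ 0 1; set c := Θ 1 0; set d := Θ 1 1
  have hm : ∀ i j, max 0 (Θ i j) = Θ i j := fun i j => max_eq_right (hΘ i j)
  have hsum : ∑ i, ∑ j, (X i j - max 0 (Θ i j))^2
      = (1-a)^2 + b^2 + (ε-c)^2 + (1-d)^2 := by
    simp [Fin.sum_univ_two, hm, X]
    ring
  rw [hsum]
  clear hsum hm hΘ hrank hε1
  clear_value a b c d
  clear X Θ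
  have hs1' : (0:ℝ) < 1 - s := by linarith
  clear_value s t
  rcases eq_or_lt_of_le (by positivity : (0:ℝ) ≤ a^2 + b^2) with hab | hab
  · -- a = b = 0
    have ha : a = 0 := by
      have h1 := sq_nonneg a
      have h2 := sq_nonneg b
      have h3 : a^2 = 0 := by linarith
      exact pow_eq_zero_iff two_ne_zero |>.1 h3
    rw [ha]
    nlinarith [sq_nonneg b, sq_nonneg (ε - c), sq_nonneg (1 - d), hs1]
  · have h1 : b^2 ≤ ((1-a)^2 + b^2) * (a^2 + b^2) := by
      nlinarith [sq_nonneg ((1-a)*(-a) - (-b)*b)]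
    have hd : (ε-c)*b - (1-d)*a = ε*b - a := by linear_combination hdet
    have h2' : ((ε-c)*b - (1-d)*a)^2 ≤ ((ε-c)^2 + (1-d)^2) * (a^2 + b^2) := by
      nlinarith [sq_nonneg ((ε-c)*a + (1-d)*b)]
    rw [hd] at h2'
    have hkeyb : (1 + ε^2 - s) * (1 - s) * b^2 = ε^2 * b^2 := by
      linear_combination b^2 * hkey
    have h3 : s * (a^2 + b^2) ≤ b^2 + (ε*b - a)^2 := by
      nlinarith [sq_nonneg ((1-s)*a - ε*b), hkeyb, hs1']
    have hmul : s * (a^2+b^2) ≤ ((1-a)^2 + b^2 + (ε-c)^2 + (1-d)^2) * (a^2+b^2) := by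
      have e : ((1-a)^2 + b^2 + (ε-c)^2 + (1-d)^2) * (a^2+b^2)
          = ((1-a)^2+b^2)*(a^2+b^2) + ((ε-c)^2+(1-d)^2)*(a^2+b^2) := by ring
      rw [e]; linarith [h1, h2', h3]
    exact le_of_mul_le_mul_right hmul hab
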